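/- (Log-Harnack inequality from the dimension-free Harnack inequality with power) Let κ be a Markov kernel from ℝ^d to ℝ^d and let c ≥ 0 be a constant (in the paper c = K/(2(1 − e^{−Kt}))). Suppose that for every p > 1, every bounded measurable f : ℝ^d → [0,∞), and all x, y ∈ ℝ^d, (∫ f dκ(x,·))^p ≤ (∫ f^p dκ(y,·)) · exp( p c |x − y|² / (p − 1) ). Then for every bounded measurable f : ℝ^d → ℝ with f ≥ 1 and all x, y ∈ ℝ^d, ∫ log f dκ(x,·) ≤ log( ∫ f dκ(y,·) ) + c |x − y|². -/

import Mathlib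

open MeasureTheory ProbabilityTheory Filter

lemma aux_tendsto (v w : ℝ) :
    Tendsto (fun p : ℝ => p * (Real.exp (v/p + w/(p-1)) - 1)) atTop (nhds (v + w)) := by
  have hD : HasDerivAt (fun s : ℝ => Real.exp (v*s + w*(s/(1-s))) - 1) (v + w) 0 := by
    have h1 : HasDerivAt (fun s : ℝ => v * s) v 0 := by
      simpa using (hasDerivAt_id (0:ℝ)).const_mul v
    have h2 : HasDerivAt (fun s : ℝ => s / (1 - s)) 1 0 := by
      have := (hasDerivAt_id (0:ℝ)).div ((hasDerivAt_id (0:ℝ)).const_sub 1) (by norm_num)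
      simpa [Pi.div_def] using this
    have h3 : HasDerivAt (fun s : ℝ => v*s + w*(s/(1-s))) (v + w) 0 :=
      h1.add (by simpa using h2.const_mul w)
    simpa using (h3.exp).sub_const 1
  have hslope := hasDerivAt_iff_tendsto_slope.mp hD
  have hinv : Tendsto (fun p : ℝ => 1/p) atTop (nhdsWithin 0 {0}ᶜ) := by
    apply tendsto_nhdsWithin_of_tendsto_nhds_of_eventually_within
    · simpa using tendsto_inv_atTop_zero
    · filter_upwards [eventually_gt_atTop 0] with p hp
      simp [ne_of_gt, hp, one_div]
  apply (hslope.comp hinv).congr'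
  filter_upwards [eventually_gt_atTop 1] with p hp
  have hp0 : p ≠ 0 := by positivity
  have hp1 : p - 1 ≠ 0 := sub_ne_zero.mpr (ne_of_gt hp)
  have e1 : (1/p) / (1 - 1/p) = 1/(p-1) := by field_simp
  simp only [Function.comp, slope_def_field]
  rw [e1]
  have h0 : Real.exp (v*0 + w*(0/(1-0))) - 1 = 0 := by norm_num
  simp only [h0]
  rw [sub_zero, sub_zero, mul_one_div, mul_one_div]
  field_simp


/-- **Log-Harnack inequality from the dimension-free Harnack inequality with power.** Let
`κ` be a Markov kernel on `ℝ^d` and `c ≥ 0`. If for every `p > 1` and every bounded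
measurable `f ≥ 0`, `(∫ f dκ(x,·))^p ≤ (∫ f^p dκ(y,·)) · exp(p c |x−y|²/(p−1))` for all
`x, y`, then for every bounded measurable `f ≥ 1`,
`∫ log f dκ(x,·) ≤ log(∫ f dκ(y,·)) + c |x−y|²` for all `x, y`. -/
theorem log_harnack_of_power_harnack {d : ℕ}
    (κ : Kernel (EuclideanSpace ℝ (Fin d)) (EuclideanSpace ℝ (Fin d))) [IsMarkovKernel κ]
    (c : ℝ) (hc : 0 ≤ c)
    (hHarnack : ∀ p : ℝ, 1 < p → ∀ f : EuclideanSpace ℝ (Fin d) → ℝ,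
      Measurable f → (∃ C, ∀ z, |f z| ≤ C) → (∀ z, 0 ≤ f z) →
      ∀ x y, (∫ z, f z ∂(κ x)) ^ p ≤
        (∫ z, f z ^ p ∂(κ y)) * Real.exp (p * c * dist x y ^ 2 / (p - 1))) :
    ∀ f : EuclideanSpace ℝ (Fin d) → ℝ, Measurable f → (∃ C, ∀ z, |f z| ≤ C) →
      (∀ z, 1 ≤ f z) →
      ∀ x y, (∫ z, Real.log (f z) ∂(κ x)) ≤
        Real.log (∫ z, f z ∂(κ y)) + c * dist x y ^ 2 := by
  rintro f hf ⟨C, hC⟩ hf1 x y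
  set r2 := dist x y ^ 2 with hr2
  have hr2nn : 0 ≤ r2 := sq_nonneg _
  have hfC : ∀ z, f z ≤ C := fun z => (le_abs_self _).trans (hC z)
  have hfInt : Integrable f (κ y) :=
    (integrable_const C).mono' hf.aestronglyMeasurable
      (ae_of_all _ fun z => by simpa using hC z)
  have ha1 : (1:ℝ) ≤ ∫ z, f z ∂(κ y) := by
    have := integral_mono (integrable_const 1) hfInt hf1
    simpa using this
  set a := ∫ z, f z ∂(κ y) with ha
  have ha0 : 0 < a := lt_of_lt_of_le one_pos ha1
  set v := Real.log a with hv
  set w := c * r2 with hw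
  have hwnn : 0 ≤ w := mul_nonneg hc hr2nn
  -- key step
  have key : ∀ p : ℝ, 1 < p →
      (∫ z, Real.log (f z) ∂(κ x)) ≤ p * (Real.exp (v/p + w/(p-1)) - 1) := by
    intro p hp
    have hp0 : (0:ℝ) < p := lt_trans one_pos hp
    have hp0' : p ≠ 0 := ne_of_gt hp0
    have hp1 : p - 1 ≠ 0 := sub_ne_zero.mpr (ne_of_gt hp)
    set g : EuclideanSpace ℝ (Fin d) → ℝ := fun z => f z ^ (1/p) with hg
    have hg1 : ∀ z, 1 ≤ g z := fun z => Real.one_le_rpow (hf1 z) (by positivity)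
    have hgC : ∀ z, g z ≤ C := fun z => by
      calc g z ≤ f z ^ (1:ℝ) :=
            Real.rpow_le_rpow_of_exponent_le (hf1 z) (by
              rw [div_le_one hp0]; exact hp.le)
        _ = f z := Real.rpow_one _
        _ ≤ C := hfC z
    have hgmeas : Measurable g := hf.pow_const _
    have hgInt : Integrable g (κ x) :=
      (integrable_const C).mono' hgmeas.aestronglyMeasurable
        (ae_of_all _ fun z => by
          rw [Real.norm_eq_abs, abs_of_nonneg (le_trans zero_le_one (hg1 z))]
          exact hgC z)
    -- Harnack applied to g
    have hH := hHarnack p hp g hgmeas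
      ⟨C, fun z => by
        rw [abs_of_nonneg (le_trans zero_le_one (hg1 z))]; exact hgC z⟩
      (fun z => le_trans zero_le_one (hg1 z)) x y
    have hgp : ∀ z, g z ^ p = f z := fun z => by
      show (f z ^ (1/p)) ^ p = f z
      rw [← Real.rpow_mul (le_trans zero_le_one (hf1 z)), one_div_mul_cancel hp0',
        Real.rpow_one]
    simp_rw [hgp] at hH
    set I := ∫ z, g z ∂(κ x) with hI
    have hI1 : (1:ℝ) ≤ I := by
      have := integral_mono (integrable_const 1) hgInt hg1
      simpa using this
    have hI0 : 0 ≤ I := le_trans zero_le_one hI1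
    -- I ≤ exp (v/p + w/(p-1))
    have hIle : I ≤ Real.exp (v/p + w/(p-1)) := by
      have h1 : (I ^ p) ^ (1/p) ≤ (a * Real.exp (p * c * r2 / (p - 1))) ^ (1/p) :=
        Real.rpow_le_rpow (Real.rpow_nonneg hI0 p) hH (by positivity)
      rw [← Real.rpow_mul hI0, mul_one_div, div_self hp0', Real.rpow_one] at h1
      refine h1.trans_eq ?_
      rw [Real.mul_rpow ha0.le (Real.exp_pos _).le,
        Real.rpow_def_of_pos ha0, ← Real.exp_mul, ← Real.exp_add]
      congr 1
      rw [hv, hw]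
      field_simp
    -- log f z ≤ p * (g z - 1)
    have hpt : ∀ z, Real.log (f z) ≤ p * (g z - 1) := fun z => by
      have hfz : 0 < f z := lt_of_lt_of_le one_pos (hf1 z)
      have h1 : Real.log (g z) ≤ g z - 1 :=
        Real.log_le_sub_one_of_pos (lt_of_lt_of_le one_pos (hg1 z))
      have h2 : Real.log (g z) = (1/p) * Real.log (f z) := Real.log_rpow hfz _
      have := mul_le_mul_of_nonneg_left h1 hp0.le
      rw [h2, ← mul_assoc, mul_one_div, div_self hp0', one_mul] at this
      exact this
    have hlogInt : Integrable (fun z => Real.log (f z)) (κ x) :=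
      (integrable_const C).mono' (hf.log.aestronglyMeasurable)
        (ae_of_all _ fun z => by
          rw [Real.norm_eq_abs, abs_of_nonneg (Real.log_nonneg (hf1 z))]
          have := Real.log_le_sub_one_of_pos (lt_of_lt_of_le one_pos (hf1 z))
          linarith [hf1 z, hfC z])
    have hL : (∫ z, Real.log (f z) ∂(κ x)) ≤ p * (I - 1) := by
      have hInt2 : Integrable (fun z => p * (g z - 1)) (κ x) := by
        simpa using (hgInt.sub (integrable_const 1)).const_mul p
      have h1 := integral_mono hlogInt hInt2 hpt
      rwa [MeasureTheory.integral_const_mul, integral_sub hgInt (integrable_const 1),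
        integral_const, probReal_univ, one_smul] at h1
    calc (∫ z, Real.log (f z) ∂(κ x)) ≤ p * (I - 1) := hL
      _ ≤ p * (Real.exp (v/p + w/(p-1)) - 1) := by
          apply mul_le_mul_of_nonneg_left _ hp0.le
          linarith [hIle]
  -- pass to the limit
  have hlim := aux_tendsto v w
  have := ge_of_tendsto hlim (eventually_atTop.mpr ⟨2, fun p hp => key p (by linarith)⟩)
  simpa [hv, hw, mul_comm] using this
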